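/- In the block composite setting, fix x ∈ E, a block index i, and β > 0, and let s₊ be a global minimizer over ℝ^{n_i} of q_β(s) = φ̄^i(s;x) + (β/2)‖s − x^i‖². Set x₊ = x[i↦s₊]. Then φ̄^i(s₊;x) ≤ φ(x) − Σ_{j≠i} g_j(x^j) − β‖x₊ − x‖². -/

import Mathlib

open scoped RealInnerProductSpace

/-- `upd x i s` is `x` with its `i`-th block replaced by `s`, in the Euclidean
product space `E = ℝ^{n 0} × ⋯ × ℝ^{n (b-1)}`. -/
noncomputable def upd {b : ℕ} {n : Fin b → ℕ}
    (x : PiLp 2 (fun i => EuclideanSpace ℝ (Fin (n i)))) (i : Fin b)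
    (s : EuclideanSpace ℝ (Fin (n i))) :
    PiLp 2 (fun i => EuclideanSpace ℝ (Fin (n i))) :=
  WithLp.toLp 2 (Function.update x i s)

set_option maxHeartbeats 1000000 in
/-- at a global minimizer `sp` of the regularized block model
`q_β(s) = φ̄^i(s;x) + (β/2)‖s − x^i‖²`, setting `x₊ = x[i ↦ sp]`, one has
`φ̄^i(sp;x) ≤ φ(x) − Σ_{j ≠ i} g_j(x^j) − β‖x₊ − x‖²`. -/
theorem model_decrease_at_minimizer
    {b m : ℕ} (hb : 0 < b) (hm : 0 < m) {n : Fin b → ℕ} (hn : ∀ i, 0 < n i)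
    (f : PiLp 2 (fun i => EuclideanSpace ℝ (Fin (n i))) → ℝ)
    (hf : Differentiable ℝ f)
    (F : PiLp 2 (fun i => EuclideanSpace ℝ (Fin (n i))) → EuclideanSpace ℝ (Fin m))
    (hF : Differentiable ℝ F)
    (h : EuclideanSpace ℝ (Fin m) → ℝ)
    (hhconv : ConvexOn ℝ Set.univ h) (hhdiff : Differentiable ℝ h)
    (Lh : ℝ) (hLh : 0 < Lh)
    (gradh : EuclideanSpace ℝ (Fin m) → EuclideanSpace ℝ (Fin m))
    (hgradh : ∀ u, HasGradientAt h (gradh u) u)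
    (hgradhLip : ∀ u v, ‖gradh u - gradh v‖ ≤ Lh * ‖u - v‖)
    (g : (i : Fin b) → EuclideanSpace ℝ (Fin (n i)) → ℝ)
    (hg : ∀ i, ConvexOn ℝ Set.univ (g i))
    (x : PiLp 2 (fun i => EuclideanSpace ℝ (Fin (n i)))) (i : Fin b)
    (β : ℝ) (hβ : 0 < β)
    -- `gif = ∇_i f(x)` is the gradient at `x^i` of `s ↦ f(x[i ↦ s])`
    (gif : EuclideanSpace ℝ (Fin (n i)))
    (hgif : HasGradientAt (fun s => f (upd x i s)) gif (x i))
    -- `GiF = ∇_i F(x)` is the Fréchet derivative at `x^i` of `s ↦ F(x[i ↦ s])`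
    (GiF : EuclideanSpace ℝ (Fin (n i)) →L[ℝ] EuclideanSpace ℝ (Fin m))
    (hGiF : HasFDerivAt (fun s => F (upd x i s)) GiF (x i))
    -- `sp` is a global minimizer of `q_β(s) = φ̄^i(s;x) + (β/2)‖s − x^i‖²`
    (sp : EuclideanSpace ℝ (Fin (n i)))
    (hmin : ∀ t,
      (f x + ⟪gif, sp - x i⟫ + h (F x + GiF (sp - x i)) + g i sp)
          + β / 2 * ‖sp - x i‖ ^ 2
        ≤ (f x + ⟪gif, t - x i⟫ + h (F x + GiF (t - x i)) + g i t)
          + β / 2 * ‖t - x i‖ ^ 2) :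
    f x + ⟪gif, sp - x i⟫ + h (F x + GiF (sp - x i)) + g i sp
      ≤ (f x + h (F x) + ∑ j, g j (x j))
        - (∑ j ∈ Finset.univ.erase i, g j (x j))
        - β * ‖upd x i sp - x‖ ^ 2 := by

  classical
  set C : ℝ := f x + h (F x) + g i (x i) with hC
  set msp : ℝ := f x + ⟪gif, sp - x i⟫ + h (F x + GiF (sp - x i)) + g i sp with hmsp
  set d2 : ℝ := ‖sp - x i‖ ^ 2 with hd2
  have hd2nn : 0 ≤ d2 := by positivity
  have key : ∀ θ : ℝ, 0 < θ → θ ≤ 1 → msp ≤ C - β * (1 - θ/2) * d2 := by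
    intro θ hθ hθ1
    have h1 := hmin (x i + (1-θ) • (sp - x i))
    have e1 : (x i + (1-θ) • (sp - x i)) - x i = (1-θ) • (sp - x i) := by abel
    rw [e1] at h1
    have e2 : ⟪gif, (1-θ) • (sp - x i)⟫ = (1-θ) * ⟪gif, sp - x i⟫ :=
      real_inner_smul_right _ _ _
    have e3 : GiF ((1-θ) • (sp - x i)) = (1-θ) • GiF (sp - x i) := map_smul _ _ _
    have e4 : F x + (1-θ) • GiF (sp - x i)
        = (1-θ) • (F x + GiF (sp - x i)) + θ • (F x) := by
      module
    have hθnn : (0:ℝ) ≤ 1 - θ := by linarith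
    have hconvh : h ((1-θ) • (F x + GiF (sp - x i)) + θ • (F x))
        ≤ (1-θ) * h (F x + GiF (sp - x i)) + θ * h (F x) :=
      hhconv.2 (Set.mem_univ _) (Set.mem_univ _) hθnn hθ.le (by ring)
    have e5 : x i + (1-θ) • (sp - x i) = (1-θ) • sp + θ • (x i) := by module
    have hconvg : g i (x i + (1-θ) • (sp - x i)) ≤ (1-θ) * g i sp + θ * g i (x i) := by
      rw [e5]
      exact (hg i).2 (Set.mem_univ _) (Set.mem_univ _) hθnn hθ.le (by ring)
    have e6 : ‖(1-θ) • (sp - x i)‖ ^ 2 = (1-θ)^2 * d2 := by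
      rw [norm_smul, Real.norm_eq_abs, mul_pow, sq_abs, hd2]
    rw [e2, e3, e4, e6] at h1
    have h2 : msp + β/2 * d2 ≤ (1-θ) * msp + θ * C + β/2 * (1-θ)^2 * d2 := by
      rw [hmsp, hC]; nlinarith [h1, hconvh, hconvg]
    have h3 : θ * msp ≤ θ * (C - β * (1 - θ/2) * d2) := by nlinarith [h2]
    exact (mul_le_mul_iff_right₀ hθ).mp h3
  have final : msp ≤ C - β * d2 := by
    apply le_of_forall_pos_le_add
    intro ε hε
    rcases eq_or_lt_of_le hd2nn with hd | hd
    · have := key 1 one_pos le_rfl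
      rw [← hd] at this ⊢
      linarith
    · set θ : ℝ := min 1 (2*ε/(β*d2)) with hθdef
      have hθpos : 0 < θ := lt_min one_pos (by positivity)
      have hθ1 : θ ≤ 1 := min_le_left _ _
      have hb2 : β * (θ/2) * d2 ≤ ε := by
        have h4 : θ ≤ 2*ε/(β*d2) := min_le_right _ _
        have h5 : θ * (β*d2) ≤ 2*ε := by
          rw [← div_mul_cancel₀ (2*ε) (show β*d2 ≠ 0 by positivity)]
          exact mul_le_mul_of_nonneg_right h4 (by positivity)
        nlinarith
      have hkey := key θ hθpos hθ1
      have expand : β * (1 - θ/2) * d2 = β * d2 - β * (θ/2) * d2 := by ring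
      linarith
  have hnorm : ‖upd x i sp - x‖ ^ 2 = d2 := by
    rw [hd2, PiLp.norm_sq_eq_of_L2]
    rw [Finset.sum_eq_single i]
    · simp [upd]
    · intro j _ hj
      simp [upd, Function.update_of_ne hj]
    · simp
  have hsum : (∑ j, g j (x j)) = g i (x i) + ∑ j ∈ Finset.univ.erase i, g j (x j) :=
    (Finset.add_sum_erase _ _ (Finset.mem_univ i)).symm
  rw [hnorm, hsum]
  linarith [final]
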